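/- For every positive integer n divisible by 66, there exists a K4-free simple graph H on n vertices with exactly n²/4 + n/66 edges such that f(H) = 2n²/33 − 7n/33. -/

import Mathlib

open SimpleGraph Finset

/-- `{u, v}` is a `K₄`-saturating edge of `G`: `u ≠ v`, `u` and `v` are nonadjacent, and
adding the edge `uv` to `G` creates a copy of `K₄`. -/
def SatEdge {V : Type*} (G : SimpleGraph V) (u v : V) : Prop :=
  u ≠ v ∧ ¬ G.Adj u v ∧ ¬ (G ⊔ SimpleGraph.fromEdgeSet {s(u, v)}).CliqueFree 4

/-- `f G`: the number of `K₄`-saturating edges of `G`. -/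
noncomputable def satCount {V : Type*} (G : SimpleGraph V) : ℕ :=
  {e : Sym2 V | ∃ u v, e = s(u, v) ∧ SatEdge G u v}.ncard

/-! Auxiliary construction -/

def M5 : Fin 5 → Fin 5 → Bool :=
  ![![false,true,true,false,true],
    ![true,false,true,true,false],
    ![true,true,false,false,false],
    ![false,true,false,false,true],
    ![true,false,false,true,false]]

def F5 : SimpleGraph (Fin 5) where
  Adj i j := M5 i j = true
  symm := ⟨by intro i j; revert i j; decide⟩
  loopless := ⟨by intro i; revert i; decide⟩

instance : DecidableRel F5.Adj := fun i j => inferInstanceAs (Decidable (M5 i j = true))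

set_option maxHeartbeats 2000000 in
lemma F5_cf : F5.CliqueFree 4 := by
  show ∀ t, ¬ F5.IsNClique 4 t
  decide

lemma cliqueFree_comap {α β : Type*} (f : α → β) {G : SimpleGraph β} {k : ℕ}
    (h : G.CliqueFree k) : (G.comap f).CliqueFree k := by
  classical
  intro s hs
  refine h (s.image f) ⟨?_, ?_⟩
  · rintro x hx y hy hxy
    simp only [Finset.coe_image, Set.mem_image, Finset.mem_coe] at hx hy
    obtain ⟨a, ha, rfl⟩ := hx; obtain ⟨b, hb, rfl⟩ := hy
    have hab : a ≠ b := fun h' => hxy (by rw [h'])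
    exact hs.1 ha hb hab
  · rw [Finset.card_image_of_injOn, hs.2]
    intro a ha b hb hfab
    by_contra hne
    have hadj : G.Adj (f a) (f b) := hs.1 ha hb hne
    exact hadj.ne hfab

def pp (m : ℕ) (x : ℕ) : Fin 5 :=
  if x < 16*m then ⟨0, by norm_num⟩
  else if x < 32*m then ⟨1, by norm_num⟩
  else if x < 36*m+1 then ⟨2, by norm_num⟩
  else if x < 51*m+1 then ⟨3, by norm_num⟩
  else ⟨4, by norm_num⟩

def aa (m : ℕ) : Fin 5 → ℕ
  | ⟨0,_⟩ => 16*m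
  | ⟨1,_⟩ => 16*m
  | ⟨2,_⟩ => 4*m+1
  | ⟨3,_⟩ => 15*m
  | ⟨4,_⟩ => 15*m-1

def HH (m : ℕ) : SimpleGraph (Fin (66*m)) := F5.comap (fun v => pp m v.val)

instance (m : ℕ) : DecidableRel (HH m).Adj :=
  fun u v => inferInstanceAs (Decidable (M5 _ _ = true))

lemma card_val_filter {N : ℕ} (P : ℕ → Prop) [DecidablePred P] :
    ((Finset.univ : Finset (Fin N)).filter fun v => P v.val).card
      = ((Finset.range N).filter P).card := by
  rw [Finset.card_filter, Finset.card_filter,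
    Fin.sum_univ_eq_sum_range (fun i => if P i then 1 else 0)]


lemma filter_pp_key {m : ℕ} (i : Fin 5) (lo hi : ℕ) (hhi : hi ≤ 66*m)
    (hiff : ∀ x, x < 66*m → (pp m x = i ↔ lo ≤ x ∧ x < hi)) :
    ((Finset.univ : Finset (Fin (66*m))).filter fun v => pp m v.val = i).card = hi - lo := by
  have h1 := card_val_filter (N := 66*m) (P := fun x => pp m x = i)
  rw [h1]
  rw [show (Finset.range (66*m)).filter (fun x => pp m x = i) = Finset.Ico lo hi from ?_]
  · exact Nat.card_Ico lo hi
  · ext x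
    simp only [Finset.mem_filter, Finset.mem_range, Finset.mem_Ico]
    constructor
    · rintro ⟨hx, hp⟩; exact (hiff x hx).mp hp
    · intro hx
      have hxr : x < 66*m := lt_of_lt_of_le hx.2 hhi
      exact ⟨hxr, (hiff x hxr).mpr hx⟩

lemma fib_card {m : ℕ} (hm : 1 ≤ m) (i : Fin 5) :
    ((Finset.univ : Finset (Fin (66*m))).filter fun v => pp m v.val = i).card = aa m i := by
  fin_cases i
  · rw [filter_pp_key _ 0 (16*m) (by omega)
      (fun x hx => by unfold pp; split_ifs <;> simp [Fin.mk.injEq] <;> omega)]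
    simp [aa]
  · rw [filter_pp_key _ (16*m) (32*m) (by omega)
      (fun x hx => by unfold pp; split_ifs <;> simp [Fin.mk.injEq] <;> omega)]
    show 32*m - 16*m = 16*m
    omega
  · rw [filter_pp_key _ (32*m) (36*m+1) (by omega)
      (fun x hx => by unfold pp; split_ifs <;> simp [Fin.mk.injEq] <;> omega)]
    show 36*m+1 - 32*m = 4*m+1
    omega
  · rw [filter_pp_key _ (36*m+1) (51*m+1) (by omega)
      (fun x hx => by unfold pp; split_ifs <;> simp [Fin.mk.injEq] <;> omega)]
    show 51*m+1 - (36*m+1) = 15*m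
    omega
  · rw [filter_pp_key _ (51*m+1) (66*m) (by omega)
      (fun x hx => by unfold pp; split_ifs <;> simp [Fin.mk.injEq] <;> omega)]
    show 66*m - (51*m+1) = 15*m-1
    omega

def gdeg (m : ℕ) (i : Fin 5) : ℕ := ∑ b ∈ Finset.univ.filter (F5.Adj i), aa m b

lemma gdeg0 (m : ℕ) (hm : 1 ≤ m) : gdeg m 0 = 35*m := by
  unfold gdeg
  rw [show Finset.univ.filter (F5.Adj 0) = ({1,2,4} : Finset (Fin 5)) from by decide]
  rw [Finset.sum_insert (by decide), Finset.sum_insert (by decide), Finset.sum_singleton]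
  show 16*m + ((4*m+1) + (15*m-1)) = 35*m
  omega

lemma gdeg1 (m : ℕ) (hm : 1 ≤ m) : gdeg m 1 = 35*m+1 := by
  unfold gdeg
  rw [show Finset.univ.filter (F5.Adj 1) = ({0,2,3} : Finset (Fin 5)) from by decide]
  rw [Finset.sum_insert (by decide), Finset.sum_insert (by decide), Finset.sum_singleton]
  show 16*m + ((4*m+1) + 15*m) = 35*m+1
  omega

lemma gdeg2 (m : ℕ) (hm : 1 ≤ m) : gdeg m 2 = 32*m := by
  unfold gdeg
  rw [show Finset.univ.filter (F5.Adj 2) = ({0,1} : Finset (Fin 5)) from by decide]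
  rw [Finset.sum_insert (by decide), Finset.sum_singleton]
  show 16*m + 16*m = 32*m
  omega

lemma gdeg3 (m : ℕ) (hm : 1 ≤ m) : gdeg m 3 = 31*m-1 := by
  unfold gdeg
  rw [show Finset.univ.filter (F5.Adj 3) = ({1,4} : Finset (Fin 5)) from by decide]
  rw [Finset.sum_insert (by decide), Finset.sum_singleton]
  show 16*m + (15*m-1) = 31*m-1
  omega

lemma gdeg4 (m : ℕ) (hm : 1 ≤ m) : gdeg m 4 = 31*m := by
  unfold gdeg
  rw [show Finset.univ.filter (F5.Adj 4) = ({0,3} : Finset (Fin 5)) from by decide]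
  rw [Finset.sum_insert (by decide), Finset.sum_singleton]
  show 16*m + 15*m = 31*m
  omega

lemma deg_HH {m : ℕ} (hm : 1 ≤ m) (v : Fin (66*m)) :
    (HH m).degree v = gdeg m (pp m v.val) := by
  rw [degree, neighborFinset_eq_filter]
  rw [Finset.card_eq_sum_card_fiberwise (f := fun w : Fin (66*m) => pp m w.val)
      (t := Finset.univ.filter (F5.Adj (pp m v.val)))
      (fun w hw => by
        simp only [Finset.mem_coe, Finset.mem_filter, Finset.mem_univ, true_and] at hw ⊢
        exact hw)]
  unfold gdeg
  refine Finset.sum_congr rfl fun b hb => ?_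
  rw [show (Finset.univ.filter fun w => (HH m).Adj v w).filter
        (fun w : Fin (66*m) => pp m w.val = b)
      = Finset.univ.filter (fun w : Fin (66*m) => pp m w.val = b) from ?_]
  · exact fib_card hm b
  · ext w
    simp only [Finset.mem_filter, Finset.mem_univ, true_and] at hb ⊢
    constructor
    · rintro ⟨_, h2⟩; exact h2
    · intro h2
      refine ⟨?_, h2⟩
      show F5.Adj (pp m v.val) (pp m w.val)
      rw [h2]; exact hb

lemma sum_deg_HH {m : ℕ} (hm : 1 ≤ m) : ∑ v, (HH m).degree v = 2178*m^2 + 2*m := by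
  calc ∑ v, (HH m).degree v
      = ∑ v : Fin (66*m), gdeg m (pp m v.val) :=
        Finset.sum_congr rfl (fun v _ => deg_HH hm v)
    _ = ∑ i : Fin 5, ∑ v ∈ Finset.univ.filter (fun v : Fin (66*m) => pp m v.val = i),
          gdeg m (pp m v.val) :=
        (Finset.sum_fiberwise_of_maps_to (fun v _ => Finset.mem_univ _) _).symm
    _ = ∑ i : Fin 5, aa m i * gdeg m i := by
        refine Finset.sum_congr rfl fun i _ => ?_
        rw [Finset.sum_congr rfl (fun v hv => by rw [(Finset.mem_filter.mp hv).2]),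
          Finset.sum_const, fib_card hm i, smul_eq_mul]
    _ = 2178*m^2 + 2*m := by
        rw [Fin.sum_univ_five, gdeg0 m hm, gdeg1 m hm, gdeg2 m hm, gdeg3 m hm, gdeg4 m hm]
        show 16*m*(35*m) + 16*m*(35*m+1) + (4*m+1)*(32*m) + 15*m*(31*m-1) + (15*m-1)*(31*m)
          = 2178*m^2 + 2*m
        obtain ⟨k, rfl⟩ : ∃ k, m = k + 1 := ⟨m-1, by omega⟩
        rw [show 31*(k+1)-1 = 31*k+30 from by omega, show 15*(k+1)-1 = 15*k+14 from by omega]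
        ring

lemma edge_card_HH {m : ℕ} (hm : 1 ≤ m) : (HH m).edgeFinset.card = 1089*m^2 + m := by
  have h := SimpleGraph.sum_degrees_eq_twice_card_edges (HH m)
  rw [sum_deg_HH hm] at h
  have h2 : 2*(1089*m^2 + m) = 2*(HH m).edgeFinset.card := by rw [← h]; ring
  exact (Nat.eq_of_mul_eq_mul_left (by norm_num) h2).symm

lemma part_mem {m : ℕ} (hm : 1 ≤ m) (i : Fin 5) (h3 : i.val < 3) :
    ∃ w : Fin (66*m), pp m w.val = i := by
  fin_cases i
  · refine ⟨⟨0, by omega⟩, ?_⟩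
    show pp m 0 = _
    unfold pp
    rw [if_pos (by omega)]
  · refine ⟨⟨16*m, by omega⟩, ?_⟩
    show pp m (16*m) = _
    unfold pp
    rw [if_neg (by omega), if_pos (by omega)]
  · refine ⟨⟨32*m, by omega⟩, ?_⟩
    show pp m (32*m) = _
    unfold pp
    rw [if_neg (by omega), if_neg (by omega), if_pos (by omega)]
  · exact absurd h3 (by decide)
  · exact absurd h3 (by decide)

lemma satEdge_iff {m : ℕ} (hm : 1 ≤ m) (u v : Fin (66*m)) :
    SatEdge (HH m) u v ↔ (pp m u.val = pp m v.val ∧ (pp m u.val).val < 3 ∧ u ≠ v) := by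
  constructor
  · rintro ⟨hne, hnadj, hncf⟩
    have hnadjF : ¬ F5.Adj (pp m u.val) (pp m v.val) := hnadj
    rw [CliqueFree] at hncf
    push_neg at hncf
    obtain ⟨t, ht⟩ := hncf
    set G' := HH m ⊔ fromEdgeSet {s(u,v)} with hG'
    have hsub : ∀ x y : Fin (66*m), G'.Adj x y → ¬ (s(x,y) = s(u,v)) → (HH m).Adj x y := by
      intro x y hxy hs
      rw [hG', sup_adj, fromEdgeSet_adj, Set.mem_singleton_iff] at hxy
      rcases hxy with h | h
      · exact h
      · exact absurd h.1 hs
    have huv : u ∈ t ∧ v ∈ t := by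
      by_contra hc
      refine cliqueFree_comap (f := fun w : Fin (66*m) => pp m w.val) F5_cf t ⟨?_, ht.2⟩
      intro x hx y hy hxy
      have hadj := ht.1 hx hy hxy
      refine hsub x y hadj fun hs => hc ?_
      rcases Sym2.eq_iff.mp hs with ⟨rfl, rfl⟩ | ⟨rfl, rfl⟩
      · exact ⟨Finset.mem_coe.mp hx, Finset.mem_coe.mp hy⟩
      · exact ⟨Finset.mem_coe.mp hy, Finset.mem_coe.mp hx⟩
    obtain ⟨hut, hvt⟩ := huv
    have hcard2 : ((t.erase u).erase v).card = 2 := by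
      rw [Finset.card_erase_of_mem (Finset.mem_erase.mpr ⟨hne.symm, hvt⟩),
          Finset.card_erase_of_mem hut, ht.2]
    obtain ⟨x, y, hxy, hr⟩ := Finset.card_eq_two.mp hcard2
    have hx : x ∈ (t.erase u).erase v := by rw [hr]; simp
    have hy : y ∈ (t.erase u).erase v := by rw [hr]; simp
    simp only [Finset.mem_erase] at hx hy
    obtain ⟨hxv, hxu, hxt⟩ := hx
    obtain ⟨hyv, hyu, hyt⟩ := hy
    have hadj : ∀ a b : Fin (66*m), a ∈ t → b ∈ t → a ≠ b → s(a,b) ≠ s(u,v) →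
        F5.Adj (pp m a.val) (pp m b.val) := by
      intro a b hat hbt hab hs
      exact hsub a b (ht.1 hat hbt hab) hs
    have h1 : F5.Adj (pp m x.val) (pp m y.val) := hadj x y hxt hyt hxy (by
      intro hs; rcases Sym2.eq_iff.mp hs with ⟨h,_⟩|⟨h,_⟩
      · exact hxu h
      · exact hxv h)
    have h2 : F5.Adj (pp m u.val) (pp m x.val) := hadj u x hut hxt (Ne.symm hxu) (by
      intro hs; rcases Sym2.eq_iff.mp hs with ⟨_,h⟩|⟨h,_⟩
      · exact hxv h
      · exact hne h)
    have h3 : F5.Adj (pp m v.val) (pp m x.val) := hadj v x hvt hxt (Ne.symm hxv) (by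
      intro hs; rcases Sym2.eq_iff.mp hs with ⟨h,_⟩|⟨_,h⟩
      · exact hne h.symm
      · exact hxu h)
    have h4 : F5.Adj (pp m u.val) (pp m y.val) := hadj u y hut hyt (Ne.symm hyu) (by
      intro hs; rcases Sym2.eq_iff.mp hs with ⟨_,h⟩|⟨h,_⟩
      · exact hyv h
      · exact hne h)
    have h5 : F5.Adj (pp m v.val) (pp m y.val) := hadj v y hvt hyt (Ne.symm hyv) (by
      intro hs; rcases Sym2.eq_iff.mp hs with ⟨h,_⟩|⟨_,h⟩
      · exact hne h.symm
      · exact hyu h)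
    have key : ∀ a b i j : Fin 5, ¬F5.Adj a b → F5.Adj i j → F5.Adj a i → F5.Adj b i →
        F5.Adj a j → F5.Adj b j → a = b ∧ a.val < 3 := by decide
    obtain ⟨he, hlt⟩ := key _ _ _ _ hnadjF h1 h2 h3 h4 h5
    exact ⟨he, hlt, hne⟩
  · rintro ⟨hpe, hlt, hne⟩
    refine ⟨hne, ?_, ?_⟩
    · intro h
      have h' : F5.Adj (pp m u.val) (pp m v.val) := h
      rw [hpe] at h'
      exact F5.loopless.irrefl _ h'
    · intro hcf
      have key2 : ∀ a : Fin 5, a.val < 3 → ∃ i j : Fin 5, i.val < 3 ∧ j.val < 3 ∧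
          F5.Adj i j ∧ F5.Adj a i ∧ F5.Adj a j := by decide
      obtain ⟨i, j, hi3, hj3, hij, hai, haj⟩ := key2 _ hlt
      obtain ⟨wi, hwi⟩ := part_mem hm i hi3
      obtain ⟨wj, hwj⟩ := part_mem hm j hj3
      set G' := HH m ⊔ fromEdgeSet {s(u,v)} with hG'
      have adjH : ∀ a b : Fin (66*m), F5.Adj (pp m a.val) (pp m b.val) → G'.Adj a b :=
        fun a b h => (sup_adj _ _ _ _).mpr (Or.inl h)
      have c1 : G'.IsNClique 1 {wj} := isNClique_singleton.mpr rfl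
      have c2 : G'.IsNClique 2 {wi, wj} := c1.insert (fun b hb => by
        rw [Finset.mem_singleton] at hb
        subst hb
        exact adjH _ _ (by rw [hwi, hwj]; exact hij))
      have c3 : G'.IsNClique 3 {v, wi, wj} := c2.insert (fun b hb => by
        rw [Finset.mem_insert, Finset.mem_singleton] at hb
        rcases hb with rfl | rfl
        · exact adjH _ _ (by rw [hwi, ← hpe]; exact hai)
        · exact adjH _ _ (by rw [hwj, ← hpe]; exact haj))
      have c4 : G'.IsNClique 4 {u, v, wi, wj} := c3.insert (fun b hb => by
        rw [Finset.mem_insert, Finset.mem_insert, Finset.mem_singleton] at hb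
        rcases hb with rfl | rfl | rfl
        · exact (sup_adj _ _ _ _).mpr (Or.inr ((fromEdgeSet_adj _).mpr ⟨rfl, hne⟩))
        · exact adjH _ _ (by rw [hwi]; exact hai)
        · exact adjH _ _ (by rw [hwj]; exact haj))
      exact hcf _ c4

def KK (m : ℕ) : SimpleGraph (Fin (66*m)) where
  Adj u v := pp m u.val = pp m v.val ∧ (pp m u.val).val < 3 ∧ u ≠ v
  symm := ⟨by rintro u v ⟨h1, h2, h3⟩; exact ⟨h1.symm, h1 ▸ h2, h3.symm⟩⟩
  loopless := ⟨by rintro u ⟨_, _, h⟩; exact h rfl⟩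

instance (m : ℕ) : DecidableRel (KK m).Adj :=
  fun u v => inferInstanceAs (Decidable (_ ∧ _ ∧ _))

lemma deg_KK {m : ℕ} (hm : 1 ≤ m) (v : Fin (66*m)) :
    (KK m).degree v = if (pp m v.val).val < 3 then aa m (pp m v.val) - 1 else 0 := by
  rw [degree, neighborFinset_eq_filter]
  by_cases h3 : (pp m v.val).val < 3
  · rw [if_pos h3]
    rw [show (Finset.univ.filter fun w => (KK m).Adj v w)
        = (Finset.univ.filter fun w : Fin (66*m) => pp m w.val = pp m v.val).erase v from ?_]
    · rw [Finset.card_erase_of_mem (by simp), fib_card hm]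
    · ext w
      simp only [Finset.mem_erase, Finset.mem_filter, Finset.mem_univ, true_and]
      constructor
      · rintro ⟨h1, h2, h4⟩; exact ⟨Ne.symm h4, h1.symm⟩
      · rintro ⟨h1, h2⟩; exact ⟨h2.symm, h3, Ne.symm h1⟩
  · rw [if_neg h3]
    rw [Finset.card_eq_zero]
    ext w
    simp only [Finset.mem_filter, Finset.mem_univ, true_and, Finset.notMem_empty, iff_false]
    rintro ⟨h1, h2, h4⟩
    exact h3 h2

lemma sum_deg_KK {m : ℕ} (hm : 1 ≤ m) :
    ∑ v, (KK m).degree v = 2*(264*m^2 - 14*m) := by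
  calc ∑ v, (KK m).degree v
      = ∑ v : Fin (66*m), (if (pp m v.val).val < 3 then aa m (pp m v.val) - 1 else 0) :=
        Finset.sum_congr rfl (fun v _ => deg_KK hm v)
    _ = ∑ i : Fin 5, ∑ v ∈ Finset.univ.filter (fun v : Fin (66*m) => pp m v.val = i),
          (if (pp m v.val).val < 3 then aa m (pp m v.val) - 1 else 0) :=
        (Finset.sum_fiberwise_of_maps_to (fun v _ => Finset.mem_univ _) _).symm
    _ = ∑ i : Fin 5, aa m i * (if i.val < 3 then aa m i - 1 else 0) := by
        refine Finset.sum_congr rfl fun i _ => ?_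
        rw [Finset.sum_congr rfl (fun v hv => by rw [(Finset.mem_filter.mp hv).2]),
          Finset.sum_const, fib_card hm i, smul_eq_mul]
    _ = 2*(264*m^2 - 14*m) := by
        rw [Fin.sum_univ_five]
        rw [show (if ((0:Fin 5)).val < 3 then aa m 0 - 1 else 0) = 16*m - 1 from
            by rw [if_pos (by decide)]; rfl,
          show (if ((1:Fin 5)).val < 3 then aa m 1 - 1 else 0) = 16*m - 1 from
            by rw [if_pos (by decide)]; rfl,
          show (if ((2:Fin 5)).val < 3 then aa m 2 - 1 else 0) = 4*m from
            by rw [if_pos (by decide)]; rfl,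
          show (if ((3:Fin 5)).val < 3 then aa m 3 - 1 else 0) = 0 from
            by rw [if_neg (by decide)],
          show (if ((4:Fin 5)).val < 3 then aa m 4 - 1 else 0) = 0 from
            by rw [if_neg (by decide)]]
        show 16*m * (16*m-1) + 16*m * (16*m-1) + (4*m+1) * (4*m) + 15*m*0 + (15*m-1)*0
          = 2*(264*m^2 - 14*m)
        obtain ⟨k, rfl⟩ : ∃ k, m = k + 1 := ⟨m-1, by omega⟩
        rw [show 16*(k+1)-1 = 16*k+15 from by omega,
          show 264*(k+1)^2 - 14*(k+1) = 264*k^2+514*k+250 from by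
            rw [Nat.sub_eq_iff_eq_add (by nlinarith)]; ring]
        ring

lemma satCount_HH {m : ℕ} (hm : 1 ≤ m) : satCount (HH m) = 264*m^2 - 14*m := by
  have hset : {e : Sym2 (Fin (66*m)) | ∃ u v, e = s(u,v) ∧ SatEdge (HH m) u v}
      = (KK m).edgeSet := by
    ext e
    induction e using Sym2.ind with
    | _ a b =>
      simp only [Set.mem_setOf_eq, mem_edgeSet]
      constructor
      · rintro ⟨u, v, he, hs⟩
        obtain ⟨h1, h2, h3⟩ := (satEdge_iff hm u v).mp hs
        have hk : (KK m).Adj u v := ⟨h1, h2, h3⟩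
        rcases Sym2.eq_iff.mp he with ⟨rfl, rfl⟩ | ⟨rfl, rfl⟩
        · exact hk
        · exact hk.symm
      · intro h
        exact ⟨a, b, rfl, (satEdge_iff hm a b).mpr ⟨h.1, h.2.1, h.2.2⟩⟩
  rw [satCount, hset, ← coe_edgeFinset, Set.ncard_coe_finset]
  have h := SimpleGraph.sum_degrees_eq_twice_card_edges (KK m)
  rw [sum_deg_KK hm] at h
  exact (Nat.eq_of_mul_eq_mul_left (show 0 < 2 by norm_num) h).symm

theorem stmt3 (n : ℕ) (hn : 0 < n) (h66 : 66 ∣ n) :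
    ∃ H : SimpleGraph (Fin n), H.CliqueFree 4 ∧
      H.edgeSet.ncard = n ^ 2 / 4 + n / 66 ∧
      (satCount H : ℝ) = 2 * (n : ℝ) ^ 2 / 33 - 7 * n / 33 := by
  obtain ⟨m, rfl⟩ := h66
  have hm : 1 ≤ m := by omega
  refine ⟨HH m, cliqueFree_comap _ F5_cf, ?_, ?_⟩
  · rw [← coe_edgeFinset, Set.ncard_coe_finset, edge_card_HH hm]
    rw [show (66*m)^2 = 4*(1089*m^2) from by ring, Nat.mul_div_cancel_left _ (by norm_num),
      Nat.mul_div_cancel_left m (by norm_num)]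
  · rw [satCount_HH hm]
    have h14 : 14*m ≤ 264*m^2 := by nlinarith
    rw [Nat.cast_sub h14]
    push_cast
    ring
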